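/- For n ≥ 1, let P^n = {x ∈ [0,4]^n : Σ_{i∈S} x_i + Σ_{i∉S} (4 − x_i) ≥ 1/2 for all S ⊆ {1,…,n}}, and let B°(4) = {(x,z) ∈ ℝ × [0,1]⁴ : x = z₁ + z₂ + z₃ + 4z₄, 1 ≥ z₁ ≥ z₂ ≥ z₃ ≥ 0, z₁ + z₄ ≤ 1}. Let P^n_ℬ = {(x,z) ∈ [0,4]^n × [0,1]^{4n} : x ∈ P^n, (x_i, z_i) ∈ B°(4) for i = 1,…,n} be the binary extended formulation with scheme ℬ = (B°(4),…,B°(4)). Then there exists a branch-and-bound tree with root label {(x,z) ∈ [0,4]^n × [0,1]^{4n} : (x_i,z_i) ∈ B°(4) for all i}, branching only on the binary z-variables with integer thresholds, having exactly 2^n + n leaves, whose leaf labels N satisfy conv(⋃_N proj_x(P^n_ℬ ∩ N)) = conv(P^n ∩ ℤ^n); i.e., it is a complete branch-and-bound tree with respect to P^n_ℬ of size 2^n + n. -/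
import Mathlib


open Set

/-- A branch-and-bound tree branching on coordinates indexed by `ι` with integer
thresholds: each internal node records the branching coordinate and threshold. -/
inductive BBTree (ι : Type) : Type where
  | leaf : BBTree ι
  | node (i : ι) (t : ℤ) (L R : BBTree ι) : BBTree ι

/-- The size of a branch-and-bound tree: its number of leaf nodes. -/
def BBTree.size {ι : Type} : BBTree ι → ℕ
  | .leaf => 1
  | .node _ _ L R => L.size + R.size

/-- The list of leaf labels of a branch-and-bound tree, given the root label `D`:
at a node branching on coordinate `i` with threshold `t`, the left child gets
`D ∩ {y : y_i ≤ t}` and the right child gets `D ∩ {y : y_i ≥ t+1}`. -/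
def BBTree.leaves {ι E : Type} (coord : ι → E → ℝ) : BBTree ι → Set E → List (Set E)
  | .leaf, D => [D]
  | .node i t L R, D =>
      BBTree.leaves coord L (D ∩ {y | coord i y ≤ (t : ℝ)}) ++
        BBTree.leaves coord R (D ∩ {y | (t : ℝ) + 1 ≤ coord i y})

namespace Stmt14Aux

abbrev E (n : ℕ) := (Fin n → ℝ) × (Fin n → Fin 4 → ℝ)

def cfn (n : ℕ) : Fin n × Fin 4 → E n → ℝ := fun ij p => p.2 ij.1 ij.2

def fullT (n : ℕ) : List (Fin n) → BBTree (Fin n × Fin 4)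
  | [] => .leaf
  | i :: l => .node (i, 3) 0 (fullT n l) (fullT n l)

def pathT (n : ℕ) : List (Fin n) → BBTree (Fin n × Fin 4)
  | [] => fullT n (List.finRange n)
  | i :: l => .node (i, 0) 0 (pathT n l) .leaf

lemma fullT_size (n : ℕ) (l : List (Fin n)) : (fullT n l).size = 2 ^ l.length := by
  induction l with
  | nil => rfl
  | cons i l ih => simp [fullT, BBTree.size, ih, pow_succ]; ring

lemma pathT_size (n : ℕ) (l : List (Fin n)) : (pathT n l).size = 2 ^ n + l.length := by
  induction l with
  | nil => simp [pathT, fullT_size, BBTree.size]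
  | cons i l ih => simp [pathT, BBTree.size, ih]; omega

lemma fullT_leaves (n : ℕ) (l : List (Fin n)) (D : Set (E n)) (N : Set (E n))
    (hN : N ∈ (fullT n l).leaves (cfn n) D) :
    N ⊆ D ∧ ∀ p ∈ N, ∀ i ∈ l, p.2 i 3 ≤ 0 ∨ 1 ≤ p.2 i 3 := by
  induction l generalizing D with
  | nil =>
    simp [fullT, BBTree.leaves] at hN
    subst hN; exact ⟨subset_rfl, by simp⟩
  | cons i l ih =>
    simp only [fullT, BBTree.leaves, List.mem_append] at hN
    rcases hN with h | h
    · obtain ⟨h1, h2⟩ := ih _ h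
      refine ⟨h1.trans inter_subset_left, ?_⟩
      intro p hp i' hi'
      rcases List.mem_cons.1 hi' with rfl | hi'
      · exact Or.inl (by simpa [cfn] using (h1 hp).2)
      · exact h2 p hp i' hi'
    · obtain ⟨h1, h2⟩ := ih _ h
      refine ⟨h1.trans inter_subset_left, ?_⟩
      intro p hp i' hi'
      rcases List.mem_cons.1 hi' with rfl | hi'
      · refine Or.inr ?_
        have := (h1 hp).2
        simp only [mem_setOf_eq, cfn] at this
        push_cast at this
        linarith
      · exact h2 p hp i' hi'


lemma zeroFour (n : ℕ) (x : Fin n → ℝ)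
    (hS : ∀ S : Finset (Fin n), (1 / 2 : ℝ) ≤ (∑ i ∈ S, x i) + ∑ i ∈ Sᶜ, (4 - x i))
    (h : ∀ j, x j = 0 ∨ x j = 4) : False := by
  classical
  set S : Finset (Fin n) := Finset.univ.filter fun j => x j = 0 with hSdef
  have h1 : ∑ i ∈ S, x i = 0 := by
    refine Finset.sum_eq_zero fun i hi => ?_
    exact (Finset.mem_filter.1 hi).2
  have h2 : ∑ i ∈ Sᶜ, (4 - x i) = 0 := by
    refine Finset.sum_eq_zero fun i hi => ?_
    have hi' : ¬ x i = 0 := by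
      have := Finset.mem_compl.1 hi
      simpa [hSdef] using this
    rcases h i with h0 | h4
    · exact absurd h0 hi'
    · rw [h4]; ring
  have := hS S
  rw [h1, h2] at this
  norm_num at this

/-- Analysis of the leaves of `pathT`: any point of the binary extended formulation
lying in some leaf has a coordinate in `[1,3]`. -/
lemma lemA (n : ℕ) (l : List (Fin n)) (D : Set (E n))
    (hD : ∀ p ∈ D, ∀ j, j ∉ l → p.2 j 0 ≤ 0)
    (N : Set (E n)) (hN : N ∈ (pathT n l).leaves (cfn n) D)
    (p : E n) (hpN : p ∈ N)
    (hPn : ∀ S : Finset (Fin n), (1 / 2 : ℝ) ≤ (∑ i ∈ S, p.1 i) + ∑ i ∈ Sᶜ, (4 - p.1 i))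
    (hBo : ∀ i, (∀ j, 0 ≤ p.2 i j ∧ p.2 i j ≤ 1) ∧
      p.1 i = p.2 i 0 + p.2 i 1 + p.2 i 2 + 4 * p.2 i 3 ∧
      p.2 i 1 ≤ p.2 i 0 ∧ p.2 i 2 ≤ p.2 i 1 ∧ p.2 i 0 + p.2 i 3 ≤ 1) :
    ∃ i, 1 ≤ p.1 i ∧ p.1 i ≤ 3 := by
  induction l generalizing D with
  | nil =>
    exfalso
    obtain ⟨hND, hN3⟩ := fullT_leaves n (List.finRange n) D N hN
    have hpD : p ∈ D := hND hpN
    refine zeroFour n p.1 hPn fun j => ?_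
    have hz0 : p.2 j 0 = 0 :=
      le_antisymm (hD p hpD j (by simp)) ((hBo j).1 0).1
    have hz1 : p.2 j 1 = 0 :=
      le_antisymm (hz0 ▸ (hBo j).2.2.1) ((hBo j).1 1).1
    have hz2 : p.2 j 2 = 0 :=
      le_antisymm (hz1 ▸ (hBo j).2.2.2.1) ((hBo j).1 2).1
    have hx : p.1 j = 4 * p.2 j 3 := by
      rw [(hBo j).2.1, hz0, hz1, hz2]; ring
    rcases hN3 p hpN j (List.mem_finRange j) with h3 | h3
    · left
      have := ((hBo j).1 3).1
      rw [hx]; nlinarith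
    · right
      have := ((hBo j).1 3).2
      rw [hx]; nlinarith
  | cons i l ih =>
    simp only [pathT, BBTree.leaves, List.mem_append, List.mem_singleton] at hN
    rcases hN with h | h
    · refine ih (D ∩ {y | cfn n (i, 0) y ≤ ((0 : ℤ) : ℝ)}) ?_ h
      intro q hq j hj
      by_cases hji : j = i
      · subst hji
        have := hq.2
        simp only [mem_setOf_eq, cfn] at this
        push_cast at this
        exact this
      · exact hD q hq.1 j (by simp [hji, List.mem_cons]; tauto)
    · subst h
      have h1 : ((0 : ℤ) : ℝ) + 1 ≤ p.2 i 0 := hpN.2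
      push_cast at h1
      refine ⟨i, ?_, ?_⟩ <;>
      · obtain ⟨hb, hsum, hc1, hc2, hc3⟩ := hBo i
        have := (hb 0).2
        have := (hb 1).1
        have := (hb 1).2
        have := (hb 2).1
        have := (hb 2).2
        have := (hb 3).1
        rw [hsum]; linarith

/-- Finding the leaf of `pathT` containing a given point. -/
lemma lemB (n : ℕ) (l : List (Fin n)) (D : Set (E n)) (p : E n) (hp : p ∈ D)
    (i : Fin n) (hi : i ∈ l) (hz : 1 ≤ p.2 i 0) (hz0 : ∀ j, j ≠ i → p.2 j 0 ≤ 0) :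
    ∃ N ∈ (pathT n l).leaves (cfn n) D, p ∈ N := by
  induction l generalizing D with
  | nil => simp at hi
  | cons i' l ih =>
    simp only [pathT, BBTree.leaves, List.mem_append, List.mem_singleton]
    by_cases hii : i' = i
    · subst hii
      refine ⟨D ∩ {y | ((0 : ℤ) : ℝ) + 1 ≤ cfn n (i', 0) y}, Or.inr rfl, hp, ?_⟩
      simp only [mem_setOf_eq, cfn]
      push_cast
      linarith
    · have hi' : i ∈ l := by
        rcases List.mem_cons.1 hi with h | h
        · exact absurd h.symm hii
        · exact h
      have hp' : p ∈ D ∩ {y | cfn n (i', 0) y ≤ ((0 : ℤ) : ℝ)} := by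
        refine ⟨hp, ?_⟩
        simp only [mem_setOf_eq, cfn]
        push_cast
        exact hz0 i' hii
      obtain ⟨N, hN, hpN⟩ := ih _ hp' hi'
      exact ⟨N, Or.inl hN, hpN⟩


/-- Every point of the box `[0,4]^n` with `x i ∈ [1,3]` lies in the convex hull of
the integer points of that kind. -/
lemma boxHull (n : ℕ) (Z : Set (Fin n → ℝ)) (i : Fin n)
    (hZ : ∀ y : Fin n → ℝ, (∀ j, 0 ≤ y j ∧ y j ≤ 4) → 1 ≤ y i → y i ≤ 3 →
      (∀ j, ∃ w : ℤ, y j = (w : ℝ)) → y ∈ Z) :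
    ∀ x : Fin n → ℝ, (∀ j, 0 ≤ x j ∧ x j ≤ 4) → 1 ≤ x i → x i ≤ 3 →
      x ∈ convexHull ℝ Z := by
  classical
  suffices H : ∀ k : ℕ, ∀ x : Fin n → ℝ,
      (Finset.univ.filter fun j => ¬∃ w : ℤ, x j = (w : ℝ)).card ≤ k →
      (∀ j, 0 ≤ x j ∧ x j ≤ 4) → 1 ≤ x i → x i ≤ 3 → x ∈ convexHull ℝ Z by
    intro x hb h1 h3
    exact H _ x le_rfl hb h1 h3
  intro k
  induction k with
  | zero =>
    intro x hc hb h1 h3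
    refine subset_convexHull ℝ Z (hZ x hb h1 h3 fun j => ?_)
    by_contra hj
    have hm : j ∈ Finset.univ.filter fun l => ¬∃ w : ℤ, x l = (w : ℝ) :=
      Finset.mem_filter.2 ⟨Finset.mem_univ j, hj⟩
    have := Finset.card_pos.2 ⟨j, hm⟩
    omega
  | succ k ih =>
    intro x hc hb h1 h3
    by_cases hall : ∀ j, ∃ w : ℤ, x j = (w : ℝ)
    · exact subset_convexHull ℝ Z (hZ x hb h1 h3 hall)
    push_neg at hall
    obtain ⟨j, hj⟩ := hall
    set a : ℤ := ⌊x j⌋ with ha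
    have haj : (a : ℝ) ≤ x j := Int.floor_le _
    have haj' : x j < (a : ℝ) + 1 := Int.lt_floor_add_one _
    have hjfrac : ∀ w : ℤ, x j ≠ (w : ℝ) := hj
    have hxjlt : (a : ℝ) < x j := lt_of_le_of_ne haj fun h => hjfrac a h.symm
    have hjmem : j ∈ Finset.univ.filter fun l => ¬∃ w : ℤ, x l = (w : ℝ) :=
      Finset.mem_filter.2 ⟨Finset.mem_univ j, fun ⟨w, hw⟩ => hjfrac w hw⟩
    -- the filter shrinks when coordinate j is replaced by an integer
    have hupd : ∀ c : ℤ,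
        (Finset.univ.filter fun l =>
          ¬∃ w : ℤ, Function.update x j (c : ℝ) l = (w : ℝ)).card ≤ k := by
      intro c
      have hsub : (Finset.univ.filter fun l =>
          ¬∃ w : ℤ, Function.update x j (c : ℝ) l = (w : ℝ)) ⊆
          (Finset.univ.filter fun l => ¬∃ w : ℤ, x l = (w : ℝ)).erase j := by
        intro l hl
        simp only [Finset.mem_filter, Finset.mem_univ, true_and] at hl
        by_cases hlj : l = j
        · subst hlj
          rw [Function.update_self] at hl
          exact absurd ⟨c, rfl⟩ hl
        · rw [Function.update_of_ne hlj] at hl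
          simp only [Finset.mem_erase, Finset.mem_filter, Finset.mem_univ, true_and]
          exact ⟨hlj, hl⟩
      have := Finset.card_le_card hsub
      have h2 := Finset.card_erase_of_mem hjmem
      have h3 := Finset.card_pos.2 ⟨j, hjmem⟩
      omega
    -- integer bounds for the floor
    have ha0 : (0 : ℤ) ≤ a := Int.le_floor.2 (by exact_mod_cast (hb j).1)
    have hxj4 : x j < 4 := lt_of_le_of_ne (hb j).2 (by
      intro h; exact hjfrac 4 (by rw [h]; norm_num))
    have ha3 : a ≤ 3 := by
      have : a < (4 : ℤ) := Int.floor_lt.2 (by exact_mod_cast hxj4)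
      omega
    -- the two rounded points are in the hull
    have key : ∀ c : ℤ, (0 : ℤ) ≤ c → c ≤ 4 → (j = i → 1 ≤ c ∧ c ≤ 3) →
        Function.update x j (c : ℝ) ∈ convexHull ℝ Z := by
      intro c h0 h4 hci
      refine ih _ (hupd c) ?_ ?_ ?_
      · intro l
        by_cases hlj : l = j
        · subst hlj
          rw [Function.update_self]
          constructor <;> exact_mod_cast (by assumption)
        · rw [Function.update_of_ne hlj]; exact hb l
      · by_cases hij : j = i
        · subst hij
          rw [Function.update_self]
          exact_mod_cast (hci rfl).1
        · rw [Function.update_of_ne (Ne.symm hij)]; exact h1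
      · by_cases hij : j = i
        · subst hij
          rw [Function.update_self]
          exact_mod_cast (hci rfl).2
        · rw [Function.update_of_ne (Ne.symm hij)]; exact h3
    have hmem1 : Function.update x j ((a : ℤ) : ℝ) ∈ convexHull ℝ Z := by
      refine key a ha0 ?_ ?_
      · exact_mod_cast haj.trans (hb j).2
      · intro hji
        subst hji
        constructor
        · exact Int.le_floor.2 (by exact_mod_cast h1)
        · exact ha3
    have hmem2 : Function.update x j (((a + 1 : ℤ)) : ℝ) ∈ convexHull ℝ Z := by
      refine key (a + 1) (by omega) (by omega) ?_
      intro hji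
      subst hji
      have hxj3 : x j < 3 := lt_of_le_of_ne h3 (by
        intro h; exact hjfrac 3 (by rw [h]; norm_num))
      have : a < (3 : ℤ) := Int.floor_lt.2 (by exact_mod_cast hxj3)
      constructor <;> omega
    -- convex combination
    set θ : ℝ := x j - a with hθ
    have hθ0 : 0 < θ := by simp [hθ]; linarith
    have hθ1 : θ < 1 := by simp [hθ]; linarith
    have hx : x = (1 - θ) • Function.update x j ((a : ℤ) : ℝ) +
        θ • Function.update x j (((a + 1 : ℤ)) : ℝ) := by
      funext l
      by_cases hlj : l = j
      · subst hlj
        simp only [Pi.add_apply, Pi.smul_apply, Function.update_self, smul_eq_mul]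
        push_cast
        ring
      · simp only [Pi.add_apply, Pi.smul_apply, Function.update_of_ne hlj, smul_eq_mul]
        ring
    rw [hx]
    exact (convex_convexHull ℝ Z) hmem1 hmem2 (by linarith) (by linarith) (by ring)

end Stmt14Aux

/-- Let
`P^n = {x ∈ [0,4]^n : Σ_{i∈S} x_i + Σ_{i∉S}(4-x_i) ≥ 1/2 for all S}` and let
`B°(4)` be the alternative binarization polytope.  For the binary extended
formulation `P^n_ℬ` with scheme `ℬ = (B°(4),…,B°(4))` there exists a
branch-and-bound tree, branching only on the binary `z`-variables, with root label
`{(x,z) ∈ [0,4]^n × [0,1]^{4n} : (x_i,z_i) ∈ B°(4) for all i}`, having exactly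
`2^n + n` leaves, which is complete with respect to `P^n_ℬ`:
`conv(⋃_N proj_x(P^n_ℬ ∩ N)) = conv(P^n ∩ ℤ^n)`. -/
theorem stmt14 (n : ℕ) (hn : 1 ≤ n)
    (Pn : Set (Fin n → ℝ))
    (hPn : Pn = {x | (∀ i, 0 ≤ x i ∧ x i ≤ 4) ∧
      ∀ S : Finset (Fin n), (1 / 2 : ℝ) ≤ (∑ i ∈ S, x i) + ∑ i ∈ Sᶜ, (4 - x i)})
    (Bo : Set (ℝ × (Fin 4 → ℝ)))
    (hBo : Bo = {p | (∀ j, 0 ≤ p.2 j ∧ p.2 j ≤ 1) ∧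
      p.1 = p.2 0 + p.2 1 + p.2 2 + 4 * p.2 3 ∧
      p.2 1 ≤ p.2 0 ∧ p.2 2 ≤ p.2 1 ∧ p.2 0 + p.2 3 ≤ 1})
    (PnB : Set ((Fin n → ℝ) × (Fin n → Fin 4 → ℝ)))
    (hPnB : PnB = {p | p.1 ∈ Pn ∧ ∀ i, (p.1 i, p.2 i) ∈ Bo})
    (D₀ : Set ((Fin n → ℝ) × (Fin n → Fin 4 → ℝ)))
    (hD₀ : D₀ = {p | (∀ i, 0 ≤ p.1 i ∧ p.1 i ≤ 4) ∧ ∀ i, (p.1 i, p.2 i) ∈ Bo}) :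
    ∃ T : BBTree (Fin n × Fin 4),
      T.size = 2 ^ n + n ∧
      convexHull ℝ (⋃ N ∈ T.leaves (fun ij p => p.2 ij.1 ij.2) D₀,
          Prod.fst '' (PnB ∩ N)) =
        convexHull ℝ {x ∈ Pn | ∀ i, ∃ w : ℤ, x i = (w : ℝ)} := by
  classical
  subst hPn hBo hPnB hD₀
  refine ⟨Stmt14Aux.pathT n (List.finRange n), ?_, ?_⟩
  · rw [Stmt14Aux.pathT_size]; simp
  apply Set.Subset.antisymm
  · -- every leaf's projection lies in the hull of the integer points
    refine convexHull_min ?_ (convex_convexHull ℝ _)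
    intro x hx
    simp only [mem_iUnion, exists_prop] at hx
    obtain ⟨N, hN, hxN⟩ := hx
    obtain ⟨p, ⟨hpPnB, hpN⟩, rfl⟩ := hxN
    obtain ⟨hp1, hp2⟩ := hpPnB
    obtain ⟨hpb, hpS⟩ := hp1
    obtain ⟨i, hi1, hi3⟩ := Stmt14Aux.lemA n (List.finRange n) _
      (fun q _ j hj => absurd (List.mem_finRange j) hj) N hN p hpN hpS
      (fun i => hp2 i)
    refine Stmt14Aux.boxHull n _ i ?_ p.1 hpb hi1 hi3
    intro y hby h1y h3y hint
    refine ⟨⟨hby, ?_⟩, hint⟩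
    intro S
    by_cases hiS : i ∈ S
    · have hA : (1 : ℝ) ≤ ∑ j ∈ S, y j :=
        le_trans h1y (Finset.single_le_sum (fun j _ => (hby j).1) hiS)
      have hB : (0 : ℝ) ≤ ∑ j ∈ Sᶜ, (4 - y j) :=
        Finset.sum_nonneg fun j _ => by linarith [(hby j).2]
      linarith
    · have hiS' : i ∈ Sᶜ := Finset.mem_compl.2 hiS
      have hA : (1 : ℝ) ≤ ∑ j ∈ Sᶜ, (4 - y j) :=
        le_trans (by linarith)
          (Finset.single_le_sum (fun j _ => by linarith [(hby j).2]) hiS')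
      have hB : (0 : ℝ) ≤ ∑ j ∈ S, y j := Finset.sum_nonneg fun j _ => (hby j).1
      linarith
  · -- every integer point is in some leaf's projection
    refine convexHull_mono ?_
    intro x hx
    obtain ⟨hxP, hxint⟩ := hx
    obtain ⟨hb, hS⟩ := hxP
    have hex : ∃ i, 1 ≤ x i ∧ x i ≤ 3 := by
      by_contra h
      push_neg at h
      refine Stmt14Aux.zeroFour n x hS fun j => ?_
      obtain ⟨w, hw⟩ := hxint j
      have h0 : (0 : ℤ) ≤ w := by
        have := (hb j).1; rw [hw] at this; exact_mod_cast this
      have h4 : w ≤ (4 : ℤ) := by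
        have := (hb j).2; rw [hw] at this; exact_mod_cast this
      by_cases h1 : 1 ≤ w
      · have h1' : (1 : ℝ) ≤ x j := by rw [hw]; exact_mod_cast h1
        have h3 := h j h1'
        have h3' : (3 : ℤ) < w := by rw [hw] at h3; exact_mod_cast h3
        have hw4 : w = 4 := by omega
        right; rw [hw, hw4]; norm_num
      · have hw0 : w = 0 := by omega
        left; rw [hw, hw0]; norm_num
    obtain ⟨i, hi1, hi3⟩ := hex
    set z : Fin n → Fin 4 → ℝ := fun j =>
      if j = i then ![1, min (x i - 1) 1, max (x i - 2) 0, 0]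
      else ![0, 0, 0, x j / 4] with hzdef
    have hBoz : ∀ j, (∀ k, 0 ≤ z j k ∧ z j k ≤ 1) ∧
        x j = z j 0 + z j 1 + z j 2 + 4 * z j 3 ∧
        z j 1 ≤ z j 0 ∧ z j 2 ≤ z j 1 ∧ z j 0 + z j 3 ≤ 1 := by
      intro j
      by_cases hji : j = i
      · subst hji
        simp only [hzdef, if_pos rfl]
        have heq : (x j - 1) ⊓ 1 + ((x j - 2) ⊔ 0) = x j - 1 := by
          rcases le_total (x j) 2 with h | h
          · rw [min_eq_left (by linarith), max_eq_right (by linarith)]; ring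
          · rw [min_eq_right (by linarith), max_eq_left (by linarith)]; ring
        have hm0 : (0 : ℝ) ≤ (x j - 1) ⊓ 1 := le_min (by linarith) (by linarith)
        have hm1 : (x j - 1) ⊓ 1 ≤ 1 := min_le_right _ _
        have hM0 : (0 : ℝ) ≤ (x j - 2) ⊔ 0 := le_max_right _ _
        have hM1 : (x j - 2) ⊔ 0 ≤ 1 := max_le (by linarith) (by linarith)
        have hMm : (x j - 2) ⊔ 0 ≤ (x j - 1) ⊓ 1 :=
          max_le (le_min (by linarith) (by linarith)) hm0
        refine ⟨?_, ?_, ?_, ?_, ?_⟩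
        · intro k
          fin_cases k <;> refine ⟨?_, ?_⟩ <;> simp <;> linarith
        · simp; linarith [heq]
        · simpa using hm1
        · simpa using hMm
        · simp
      · simp only [hzdef, if_neg hji]
        refine ⟨?_, ?_, ?_, ?_, ?_⟩
        · intro k
          fin_cases k <;> simp <;> constructor <;> linarith [(hb j).1, (hb j).2]
        · simp; ring
        · simp
        · simp
        · simp; linarith [(hb j).2]
    have hpD : ((x, z) : (Fin n → ℝ) × (Fin n → Fin 4 → ℝ)) ∈
        {p : (Fin n → ℝ) × (Fin n → Fin 4 → ℝ) |
          (∀ i, 0 ≤ p.1 i ∧ p.1 i ≤ 4) ∧ ∀ i, (p.1 i, p.2 i) ∈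
            {p : ℝ × (Fin 4 → ℝ) | (∀ j, 0 ≤ p.2 j ∧ p.2 j ≤ 1) ∧
              p.1 = p.2 0 + p.2 1 + p.2 2 + 4 * p.2 3 ∧
              p.2 1 ≤ p.2 0 ∧ p.2 2 ≤ p.2 1 ∧ p.2 0 + p.2 3 ≤ 1}} :=
      ⟨hb, fun j => hBoz j⟩
    have hz1 : 1 ≤ z i 0 := by simp [hzdef]
    have hz0 : ∀ j, j ≠ i → z j 0 ≤ 0 := by
      intro j hj; simp [hzdef, hj]
    obtain ⟨N, hN, hpN⟩ := Stmt14Aux.lemB n (List.finRange n) _ (x, z) hpD i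
      (List.mem_finRange i) hz1 hz0
    simp only [mem_iUnion, exists_prop]
    exact ⟨N, hN, ⟨(x, z), ⟨⟨⟨hb, hS⟩, fun j => hBoz j⟩, hpN⟩, rfl⟩⟩
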